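/- Let G be a marked graph with adjacent vertices v ≠ w. Let N_v be the neighbors of v not adjacent to w, N_w the neighbors of w not adjacent to v, and N_vw the common neighbors of v and w (so v ∈ N_w and w ∈ N_v). Then ((G_cru^v)_cru^w)_cru^v is obtained from G by exactly: (a) changing the mark of v by the pattern c↔unmarked, r↔cr, u↔ur; (b) changing the mark of w by the same pattern; (c) making the neighbors of v equal to (N_w − v) ∪ {w} ∪ N_vw and the neighbors of w equal to (N_v − w) ∪ {v} ∪ N_vw; (d) toggling every adjacency between two vertices lying in different elements of {N_v − w, N_w − v, N_vw}. -/

import Mathlib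

/-- The six vertex marks of a multiply marked graph. -/
inductive Mark : Type
  | un | r | c | cr | u | ur
deriving DecidableEq

/-- A (multiply marked) graph: symmetric irreflexive adjacency, loops,
marks, and a number of free loops. -/
structure MGraph (V : Type) [DecidableEq V] : Type where
  adj : V → V → Bool
  adj_symm : ∀ x y, adj x y = adj y x
  adj_irrefl : ∀ x, adj x x = false
  loop : V → Bool
  mark : V → Mark
  freeLoops : ℕ

namespace MGraph

variable {V : Type} [DecidableEq V]

/-- The mark change at `v` itself: unmarked↔u, r↔ur, c↔cr. -/
def flipV : Mark → Mark
  | .un => .u | .u => .un | .r => .ur | .ur => .r | .c => .cr | .cr => .c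

/-- The mark change at neighbors of `v`: unmarked↔r, c↔ur, u↔cr. -/
def flipN : Mark → Mark
  | .un => .r | .r => .un | .c => .ur | .ur => .c | .u => .cr | .cr => .u

/-- The marked local complement `G_cru^v`. -/
def mlc (G : MGraph V) (v : V) : MGraph V where
  adj x y := if x ≠ y ∧ G.adj v x = true ∧ G.adj v y = true then !(G.adj x y) else G.adj x y
  adj_symm := by
    intro x y
    try dsimp only
    by_cases h : x ≠ y ∧ G.adj v x = true ∧ G.adj v y = true
    · rw [if_pos h, if_pos ⟨h.1.symm, h.2.2, h.2.1⟩, G.adj_symm]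
    · rw [if_neg h, if_neg (fun h' => h ⟨h'.1.symm, h'.2.2, h'.2.1⟩), G.adj_symm]
  adj_irrefl := by
    intro x
    try dsimp only
    rw [if_neg (fun h => h.1 rfl), G.adj_irrefl]
  loop := G.loop
  mark x := if x = v then flipV (G.mark x)
            else if G.adj v x = true then flipN (G.mark x) else G.mark x
  freeLoops := G.freeLoops

end MGraph

namespace MGraph

variable {V : Type} [DecidableEq V]

/-- Membership in `N_v − w`: neighbors of `v` that are not neighbors of `w`,
other than `w` itself. -/
def inNv (G : MGraph V) (v w x : V) : Prop :=
  G.adj v x = true ∧ G.adj w x = false ∧ x ≠ w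

/-- Membership in `N_w − v`: neighbors of `w` that are not neighbors of `v`,
other than `v` itself. -/
def inNw (G : MGraph V) (v w x : V) : Prop :=
  G.adj w x = true ∧ G.adj v x = false ∧ x ≠ v

/-- Membership in `N_vw`: common neighbors of `v` and `w`. -/
def inNvw (G : MGraph V) (v w x : V) : Prop :=
  G.adj v x = true ∧ G.adj w x = true

/-- `x` and `y` lie in different elements of `{N_v − w, N_w − v, N_vw}`. -/
def diffClass (G : MGraph V) (v w x y : V) : Prop :=
  (G.inNv v w x ∧ (G.inNw v w y ∨ G.inNvw v w y)) ∨
  (G.inNw v w x ∧ (G.inNv v w y ∨ G.inNvw v w y)) ∨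
  (G.inNvw v w x ∧ (G.inNv v w y ∨ G.inNw v w y))

end MGraph

/-- The mark change at the pivot vertices: c↔unmarked, r↔cr, u↔ur. -/
def pivotMark : Mark → Mark
  | .c => .un | .un => .c | .r => .cr | .cr => .r | .u => .ur | .ur => .u



lemma flipN_flipN (m : Mark) : MGraph.flipN (MGraph.flipN m) = m := by cases m <;> rfl
lemma pivot_v (m : Mark) : MGraph.flipV (MGraph.flipN (MGraph.flipV m)) = pivotMark m := by
  cases m <;> rfl
lemma pivot_w (m : Mark) : MGraph.flipN (MGraph.flipV (MGraph.flipN m)) = pivotMark m := by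
  cases m <;> rfl

set_option maxHeartbeats 2000000 in
/-- Closed form for the pivot adjacency away from `v` and `w`. -/
lemma triple_adj {V : Type} [DecidableEq V] (G : MGraph V) (v w : V)
    (hvw : v ≠ w) (hadj : G.adj v w = true) (x y : V)
    (hxv : x ≠ v) (hxw : x ≠ w) (hyv : y ≠ v) (hyw : y ≠ w) (hxy : x ≠ y) :
    (((G.mlc v).mlc w).mlc v).adj x y =
      xor (xor (G.adj v x && G.adj v y)
        (xor ((xor (G.adj v x) (G.adj w x)) && (xor (G.adj v y) (G.adj w y)))
          (G.adj w x && G.adj w y))) (G.adj x y) := by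
  have hwv : G.adj w v = true := by rw [G.adj_symm]; exact hadj
  have avv : G.adj v v = false := G.adj_irrefl v
  have aww : G.adj w w = false := G.adj_irrefl w
  rcases Bool.eq_false_or_eq_true (G.adj v x) with ha | ha <;>
    rcases Bool.eq_false_or_eq_true (G.adj w x) with hb | hb <;>
    rcases Bool.eq_false_or_eq_true (G.adj v y) with ha' | ha' <;>
    rcases Bool.eq_false_or_eq_true (G.adj w y) with hb' | hb' <;>
    simp [MGraph.mlc, hvw, hvw.symm, hadj, hwv, avv, aww, ha, hb, ha', hb',
      hxv, hxw, hyv, hyw, hxy, hxv.symm, hxw.symm, hyv.symm, hyw.symm, hxy.symm]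

set_option maxHeartbeats 1000000 in
/-- the marked pivot `((G_cru^v)_cru^w)_cru^v` is obtained from
`G` by exactly the changes (a)–(d), and no others. -/
theorem marked_pivot_description {V : Type} [DecidableEq V] (G : MGraph V)
    (v w : V) (hvw : v ≠ w) (hadj : G.adj v w = true) :
    -- (a) the mark of v changes by c↔unmarked, r↔cr, u↔ur
    (((G.mlc v).mlc w).mlc v).mark v = pivotMark (G.mark v) ∧
    -- (b) the mark of w changes by the same pattern
    (((G.mlc v).mlc w).mlc v).mark w = pivotMark (G.mark w) ∧
    -- (c) the neighbors of v become (N_w − v) ∪ {w} ∪ N_vw ...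
    (∀ x, (((G.mlc v).mlc w).mlc v).adj v x = true ↔
      (G.inNw v w x ∨ x = w ∨ G.inNvw v w x)) ∧
    -- ... and the neighbors of w become (N_v − w) ∪ {v} ∪ N_vw
    (∀ x, (((G.mlc v).mlc w).mlc v).adj w x = true ↔
      (G.inNv v w x ∨ x = v ∨ G.inNvw v w x)) ∧
    -- (d) adjacencies between vertices in different elements of
    -- {N_v − w, N_w − v, N_vw} are toggled
    (∀ x y, G.diffClass v w x y →
      (((G.mlc v).mlc w).mlc v).adj x y = !(G.adj x y)) ∧
    -- and no other changes: marks of other vertices are unchanged,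
    (∀ x, x ≠ v → x ≠ w → (((G.mlc v).mlc w).mlc v).mark x = G.mark x) ∧
    -- loops are unchanged,
    (∀ x, (((G.mlc v).mlc w).mlc v).loop x = G.loop x) ∧
    -- and all other adjacencies are unchanged
    (∀ x y, x ≠ v → x ≠ w → y ≠ v → y ≠ w → ¬ G.diffClass v w x y →
      (((G.mlc v).mlc w).mlc v).adj x y = G.adj x y) := by
  have hwv : G.adj w v = true := by rw [G.adj_symm]; exact hadj
  have avv : G.adj v v = false := G.adj_irrefl v
  have aww : G.adj w w = false := G.adj_irrefl w
  have hwv' : w ≠ v := hvw.symm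
  have notv : ∀ z : V, G.adj v z = true → z ≠ v := by
    rintro z hz rfl; rw [avv] at hz; exact absurd hz (by simp)
  have notw : ∀ z : V, G.adj w z = true → z ≠ w := by
    rintro z hz rfl; rw [aww] at hz; exact absurd hz (by simp)
  refine ⟨?_, ?_, ?_, ?_, ?_, ?_, fun x => rfl, ?_⟩
  · simp [MGraph.mlc, hvw, hwv', hadj, hwv, avv, aww, pivot_v]
  · simp [MGraph.mlc, hvw, hwv', hadj, hwv, avv, aww, pivot_w]
  · intro x
    rcases eq_or_ne x v with rfl | hxv
    · simp [MGraph.mlc, MGraph.inNw, MGraph.inNvw, hvw, hwv', hadj, hwv, avv, aww]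
    rcases eq_or_ne x w with rfl | hxw
    · simp [MGraph.mlc, MGraph.inNw, MGraph.inNvw, hvw, hwv', hadj, hwv, avv, aww]
    rcases Bool.eq_false_or_eq_true (G.adj v x) with ha | ha <;>
      rcases Bool.eq_false_or_eq_true (G.adj w x) with hb | hb <;>
      simp [MGraph.mlc, MGraph.inNw, MGraph.inNvw, hvw, hwv', hadj, hwv, avv, aww,
        ha, hb, hxv, hxw, hxv.symm, hxw.symm]
  · intro x
    rcases eq_or_ne x v with rfl | hxv
    · simp [MGraph.mlc, MGraph.inNv, MGraph.inNvw, hvw, hwv', hadj, hwv, avv, aww]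
    rcases eq_or_ne x w with rfl | hxw
    · simp [MGraph.mlc, MGraph.inNv, MGraph.inNvw, hvw, hwv', hadj, hwv, avv, aww]
    rcases Bool.eq_false_or_eq_true (G.adj v x) with ha | ha <;>
      rcases Bool.eq_false_or_eq_true (G.adj w x) with hb | hb <;>
      simp [MGraph.mlc, MGraph.inNv, MGraph.inNvw, hvw, hwv', hadj, hwv, avv, aww,
        ha, hb, hxv, hxw, hxv.symm, hxw.symm]
  · intro x y hd
    have step : ∀ hax hbx hay hby : Bool, G.adj v x = hax → G.adj w x = hbx →
        G.adj v y = hay → G.adj w y = hby → x ≠ v → x ≠ w → y ≠ v → y ≠ w → x ≠ y →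
        (xor (hax && hay) (xor ((xor hax hbx) && (xor hay hby)) (hbx && hby)) = true) →
        (((G.mlc v).mlc w).mlc v).adj x y = !(G.adj x y) := by
      intro hax hbx hay hby h1 h2 h3 h4 hxv hxw hyv hyw hxy hx
      rw [triple_adj G v w hvw hadj x y hxv hxw hyv hyw hxy, h1, h2, h3, h4]
      revert hx
      cases hax <;> cases hbx <;> cases hay <;> cases hby <;> simp
    rcases hd with ⟨⟨h1,h2,h5⟩,⟨h3,h4,h6⟩|⟨h3,h4⟩⟩|⟨⟨h1,h2,h5⟩,⟨h3,h4,h6⟩|⟨h3,h4⟩⟩|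
        ⟨⟨h1,h2⟩,⟨h3,h4,h6⟩|⟨h3,h4,h6⟩⟩
    · exact step _ _ _ _ h1 h2 h4 h3 (notv _ h1) h5 h6 (notw _ h3)
        (by rintro rfl; rw [h1] at h4; exact absurd h4 (by simp)) rfl
    · exact step _ _ _ _ h1 h2 h3 h4 (notv _ h1) h5 (notv _ h3) (notw _ h4)
        (by rintro rfl; rw [h2] at h4; exact absurd h4 (by simp)) rfl
    · exact step _ _ _ _ h2 h1 h3 h4 h5 (notw _ h1) (notv _ h3) h6
        (by rintro rfl; rw [h1] at h4; exact absurd h4 (by simp)) rfl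
    · exact step _ _ _ _ h2 h1 h3 h4 h5 (notw _ h1) (notv _ h3) (notw _ h4)
        (by rintro rfl; rw [h2] at h3; exact absurd h3 (by simp)) rfl
    · exact step _ _ _ _ h1 h2 h3 h4 (notv _ h1) (notw _ h2) (notv _ h3) h6
        (by rintro rfl; rw [h2] at h4; exact absurd h4 (by simp)) rfl
    · exact step _ _ _ _ h1 h2 h4 h3 (notv _ h1) (notw _ h2) h6 (notw _ h3)
        (by rintro rfl; rw [h1] at h4; exact absurd h4 (by simp)) rfl
  · intro x hxv hxw
    rcases Bool.eq_false_or_eq_true (G.adj v x) with ha | ha <;>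
      rcases Bool.eq_false_or_eq_true (G.adj w x) with hb | hb <;>
      simp [MGraph.mlc, hvw, hwv', hadj, hwv, avv, aww, ha, hb, hxv, hxw,
        hxv.symm, hxw.symm, flipN_flipN]
  · intro x y hxv hxw hyv hyw hnd
    rcases eq_or_ne x y with rfl | hxy
    · simp [MGraph.mlc]
    rw [triple_adj G v w hvw hadj x y hxv hxw hyv hyw hxy]
    rcases Bool.eq_false_or_eq_true (G.adj v x) with ha | ha <;>
      rcases Bool.eq_false_or_eq_true (G.adj w x) with hb | hb <;>
      rcases Bool.eq_false_or_eq_true (G.adj v y) with ha' | ha' <;>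
      rcases Bool.eq_false_or_eq_true (G.adj w y) with hb' | hb' <;>
      simp_all [MGraph.diffClass, MGraph.inNv, MGraph.inNw, MGraph.inNvw]
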